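/- For every real x with 0 ≤ x < 1/2 and every positive integer r, the identity ∑_{k=r}^∞ ((-1)^k * binomial(k,r) / k^2) * (x/(1-x))^k = ((-1)^r / r) * ∑_{k=r}^∞ x^k / k holds. -/

import Mathlib

open Finset

private lemma alt_sum_real (n : ℕ) :
    ∑ k ∈ range (n + 2), (-1 : ℝ) ^ k * ((n + 1).choose k) = 0 := by
  have h := Int.alternating_sum_range_choose_of_ne (n := n + 1) (by omega)
  exact_mod_cast congrArg (Int.cast : ℤ → ℝ) h

private lemma Bsum (s : ℕ) : ∀ n : ℕ,
    ∑ k ∈ range (n + 1),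
      (-1 : ℝ) ^ k * ((k + s).choose s) * ((n + s + 1).choose (k + s + 1)) = 1
  | 0 => by simp
  | (n + 1) => by
    have hsplit : ∀ k : ℕ, ((n + 1 + s + 1).choose (k + s + 1) : ℝ)
        = ((n + s + 1).choose (k + s + 1) : ℝ) + ((n + s + 1).choose (k + s) : ℝ) := by
      intro k
      rw [show n + 1 + s + 1 = (n + s + 1) + 1 by ring, show k + s + 1 = (k + s) + 1 from rfl,
        Nat.choose_succ_succ]
      push_cast; ring
    have tri : ∀ k ∈ range (n + 2),
        (-1 : ℝ) ^ k * ((k + s).choose s) * ((n + s + 1).choose (k + s))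
          = ((n + s + 1).choose s : ℝ) * ((-1 : ℝ) ^ k * ((n + 1).choose k)) := by
      intro k hk
      have h := Nat.choose_mul (n := n + s + 1) (k := k + s) (s := s)
        (by omega)
      rw [show n + s + 1 - s = n + 1 by omega, show k + s - s = k by omega] at h
      have h' : ((n + s + 1).choose (k + s) : ℝ) * ((k + s).choose s : ℝ)
          = ((n + s + 1).choose s : ℝ) * ((n + 1).choose k : ℝ) := by exact_mod_cast h
      linear_combination ((-1 : ℝ) ^ k) * h'
    calc ∑ k ∈ range (n + 1 + 1),
          (-1 : ℝ) ^ k * ((k + s).choose s) * ((n + 1 + s + 1).choose (k + s + 1))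
        = (∑ k ∈ range (n + 2), (-1:ℝ)^k * ((k+s).choose s) * ((n+s+1).choose (k+s+1)))
          + ∑ k ∈ range (n + 2), (-1:ℝ)^k * ((k+s).choose s) * ((n+s+1).choose (k+s)) := by
          rw [← Finset.sum_add_distrib]
          exact Finset.sum_congr rfl fun k _ => by rw [hsplit k]; ring
      _ = 1 := by
          rw [Finset.sum_range_succ (n := n + 1), Bsum s n,
            Nat.choose_eq_zero_of_lt (by omega : n + s + 1 < n + 1 + s + 1)]
          rw [Finset.sum_congr rfl tri, ← Finset.mul_sum, alt_sum_real]
          simp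

private lemma coeff_eval (s n : ℕ) :
    ∑ k ∈ range (n + 1),
      ((-1 : ℝ) ^ (k + (s + 1)) * ((k + (s + 1)).choose (s + 1)) / ((k : ℝ) + ((s + 1 : ℕ) : ℝ)) ^ 2)
        * ((n + s).choose (k + s))
      = (-1 : ℝ) ^ (s + 1) / (((s : ℝ) + 1) * ((n : ℝ) + s + 1)) := by
  have hterm : ∀ k ∈ range (n + 1),
      ((-1 : ℝ) ^ (k + (s + 1)) * ((k + (s + 1)).choose (s + 1)) / ((k : ℝ) + ((s + 1 : ℕ) : ℝ)) ^ 2)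
        * ((n + s).choose (k + s))
      = ((-1 : ℝ) ^ (s + 1) / (((s : ℝ) + 1) * ((n : ℝ) + s + 1)))
          * ((-1 : ℝ) ^ k * ((k + s).choose s) * ((n + s + 1).choose (k + s + 1))) := by
    intro k _
    have h1 : ((k + s + 1).choose (s + 1) : ℝ) * ((s : ℝ) + 1)
        = ((k : ℝ) + s + 1) * ((k + s).choose s : ℝ) := by
      exact_mod_cast (Nat.add_one_mul_choose_eq (k + s) s).symm
    have h2 : ((n : ℝ) + s + 1) * ((n + s).choose (k + s) : ℝ)
        = ((n + s + 1).choose (k + s + 1) : ℝ) * ((k : ℝ) + s + 1) := by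
      exact_mod_cast Nat.add_one_mul_choose_eq (n + s) (k + s)
    have key : ((k + s + 1).choose (s + 1) : ℝ) * ((n + s).choose (k + s))
          * (((s : ℝ) + 1) * ((n : ℝ) + s + 1))
        = ((k + s).choose s : ℝ) * ((n + s + 1).choose (k + s + 1)) * ((k : ℝ) + s + 1) ^ 2 := by
      linear_combination (((n : ℝ) + s + 1) * ((n + s).choose (k + s) : ℝ)) * h1
        + (((k : ℝ) + s + 1) * ((k + s).choose s : ℝ)) * h2
    have hcast : ((k : ℝ) + ((s + 1 : ℕ) : ℝ)) = (k : ℝ) + s + 1 := by push_cast; ring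
    have hkne : ((k : ℝ) + s + 1) ≠ 0 := by positivity
    have hsne : ((s : ℝ) + 1) ≠ 0 := by positivity
    have hnne : ((n : ℝ) + s + 1) ≠ 0 := by positivity
    rw [hcast, show k + (s + 1) = k + s + 1 from rfl]
    field_simp
    linear_combination ((-1 : ℝ) ^ (k + s + 1)) * key
  rw [Finset.sum_congr rfl hterm, ← Finset.mul_sum, Bsum s n, mul_one]

theorem renyi_series_identity (x : ℝ) (hx0 : 0 ≤ x) (hx : x < 1/2) (r : ℕ) (hr : 0 < r) :
    ∑' k : ℕ, ((-1 : ℝ) ^ (k + r) * ((k + r).choose r) / ((k + r) : ℝ) ^ 2)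
        * (x / (1 - x)) ^ (k + r)
      = ((-1 : ℝ) ^ r / r) * ∑' k : ℕ, x ^ (k + r) / ((k + r) : ℝ) := by
  obtain ⟨s, rfl⟩ : ∃ s, r = s + 1 := ⟨r - 1, by omega⟩
  have h1x : (0:ℝ) < 1 - x := by linarith
  have hxn : ‖x‖ < 1 := by rw [Real.norm_eq_abs, abs_of_nonneg hx0]; linarith
  set y : ℝ := x / (1 - x) with hy
  have hy0 : 0 ≤ y := div_nonneg hx0 h1x.le
  have hy1 : y < 1 := by rw [hy, div_lt_one h1x]; linarith
  have hyn : ‖y‖ < 1 := by rw [Real.norm_eq_abs, abs_of_nonneg hy0]; exact hy1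
  set c : ℕ → ℝ :=
    fun k => (-1 : ℝ) ^ (k + (s+1)) * ((k + (s+1)).choose (s+1)) / ((k : ℝ) + ((s+1 : ℕ) : ℝ)) ^ 2
    with hc
  set F : ℕ × ℕ → ℝ :=
    fun p => c p.1 * (((p.2 + (p.1 + s)).choose (p.1 + s) : ℝ) * x ^ (p.1 + (s+1) + p.2)) with hF
  have hB : ∀ k : ℕ, HasSum (fun j => F (k, j)) (c k * y ^ (k + (s+1))) := by
    intro k
    have h := (hasSum_choose_mul_geometric_of_norm_lt_one (k + s) hxn).mul_left
      (c k * x ^ (k + (s+1)))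
    have hfun : (fun j => F (k, j))
        = fun j => c k * x ^ (k + (s+1)) * (((j + (k + s)).choose (k + s) : ℝ) * x ^ j) := by
      funext j
      show c k * (((j + (k + s)).choose (k + s) : ℝ) * x ^ (k + (s+1) + j)) = _
      rw [pow_add]; ring
    have hval : c k * x ^ (k + (s+1)) * (1 / (1 - x) ^ (k + s + 1)) = c k * y ^ (k + (s+1)) := by
      rw [hy, div_pow]; ring
    rw [hfun, ← hval]
    exact h
  have hBn : ∀ k : ℕ, HasSum (fun j => ‖F (k, j)‖) (‖c k‖ * y ^ (k + (s+1))) := by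
    intro k
    have h := (hasSum_choose_mul_geometric_of_norm_lt_one (k + s) hxn).mul_left
      (‖c k‖ * x ^ (k + (s+1)))
    have hfun : (fun j => ‖F (k, j)‖)
        = fun j => ‖c k‖ * x ^ (k + (s+1)) * (((j + (k + s)).choose (k + s) : ℝ) * x ^ j) := by
      funext j
      rw [show F (k, j) = c k * (((j + (k + s)).choose (k + s) : ℝ) * x ^ (k + (s+1) + j)) from rfl,
        norm_mul, Real.norm_eq_abs (((j + (k + s)).choose (k + s) : ℝ) * x ^ (k + (s+1) + j)),
        abs_of_nonneg (by positivity), pow_add]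
      ring
    have hval : ‖c k‖ * x ^ (k + (s+1)) * (1 / (1 - x) ^ (k + s + 1))
        = ‖c k‖ * y ^ (k + (s+1)) := by
      rw [hy, div_pow]; ring
    rw [hfun, ← hval]
    exact h
  have hcb : ∀ k : ℕ, ‖c k‖ ≤ ((k + (s+1)).choose (s+1) : ℝ) := by
    intro k
    have hck : ‖c k‖ = ((k + (s+1)).choose (s+1) : ℝ) / ((k : ℝ) + ((s+1 : ℕ) : ℝ)) ^ 2 := by
      rw [hc]
      rw [norm_div, norm_mul, norm_pow, norm_neg, norm_one, one_pow, one_mul,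
        Real.norm_natCast, norm_pow, Real.norm_eq_abs, abs_of_nonneg (by positivity)]
    rw [hck]
    apply div_le_self (by positivity)
    have h1 : (1 : ℝ) ≤ (k : ℝ) + ((s+1 : ℕ) : ℝ) := by
      have : (1 : ℝ) ≤ ((s+1 : ℕ) : ℝ) := by exact_mod_cast Nat.one_le_iff_ne_zero.2 (by omega)
      have hk0 : (0 : ℝ) ≤ (k : ℝ) := Nat.cast_nonneg k
      linarith
    nlinarith
  have houter : Summable (fun k : ℕ => ‖c k‖ * y ^ (k + (s+1))) := by
    have hgeo : Summable (fun k : ℕ => ((k + (s+1)).choose (s+1) : ℝ) * y ^ k * y ^ (s+1)) :=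
      (summable_choose_mul_geometric_of_norm_lt_one (s+1) hyn).mul_right _
    apply Summable.of_nonneg_of_le (fun k => by positivity) _ hgeo
    intro k
    calc ‖c k‖ * y ^ (k + (s+1)) ≤ ((k + (s+1)).choose (s+1) : ℝ) * y ^ (k + (s+1)) :=
        mul_le_mul_of_nonneg_right (hcb k) (by positivity)
      _ = ((k + (s+1)).choose (s+1) : ℝ) * y ^ k * y ^ (s+1) := by rw [pow_add]; ring
  have hFn : Summable (fun p : ℕ × ℕ => ‖F p‖) := by
    apply (summable_prod_of_nonneg (fun p => norm_nonneg _)).2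
    refine ⟨fun k => (hBn k).summable, ?_⟩
    apply houter.congr
    intro k
    exact ((hBn k).tsum_eq).symm
  have hFs : Summable F := hFn.of_norm
  have hLHS : ∑' p : ℕ × ℕ, F p = ∑' k : ℕ, c k * y ^ (k + (s+1)) := by
    rw [Summable.tsum_prod' hFs (fun k => (hB k).summable)]
    exact tsum_congr fun k => (hB k).tsum_eq
  have hdiag : ∑' p : ℕ × ℕ, F p = ∑' n : ℕ, ∑ kl ∈ Finset.HasAntidiagonal.antidiagonal n, F kl := by
    have hsig : Summable (fun q : (Σ n : ℕ, {p : ℕ × ℕ // p ∈ Finset.HasAntidiagonal.antidiagonal n}) =>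
        F (Finset.HasAntidiagonal.sigmaAntidiagonalEquivProd q)) :=
      Finset.HasAntidiagonal.sigmaAntidiagonalEquivProd.summable_iff.2 hFs
    calc ∑' p : ℕ × ℕ, F p
        = ∑' q : (Σ n : ℕ, {p : ℕ × ℕ // p ∈ Finset.HasAntidiagonal.antidiagonal n}),
            F (Finset.HasAntidiagonal.sigmaAntidiagonalEquivProd q) :=
          (Finset.HasAntidiagonal.sigmaAntidiagonalEquivProd.tsum_eq F).symm
      _ = ∑' n : ℕ, ∑' a : {p : ℕ × ℕ // p ∈ Finset.HasAntidiagonal.antidiagonal n}, F ↑a :=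
          Summable.tsum_sigma' (fun n => (hasSum_fintype _).summable) hsig
      _ = ∑' n : ℕ, ∑ kl ∈ Finset.HasAntidiagonal.antidiagonal n, F kl :=
          tsum_congr fun n => by rw [Finset.tsum_subtype]
  have hanti : ∀ n : ℕ, ∑ kl ∈ Finset.HasAntidiagonal.antidiagonal n, F kl
      = ((-1 : ℝ) ^ (s+1) / ((s+1 : ℕ) : ℝ))
          * (x ^ (n + (s+1)) / ((n : ℝ) + ((s+1 : ℕ) : ℝ))) := by
    intro n
    rw [Finset.Nat.sum_antidiagonal_eq_sum_range_succ_mk]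
    have hterm : ∀ k ∈ range (n+1),
        F (k, n - k) = (c k * ((n + s).choose (k + s) : ℝ)) * x ^ (n + (s+1)) := by
      intro k hk
      simp only [mem_range] at hk
      have h1 : n - k + (k + s) = n + s := by omega
      have h2 : k + (s+1) + (n - k) = n + (s+1) := by omega
      rw [show F (k, n - k)
          = c k * (((n - k + (k + s)).choose (k + s) : ℝ) * x ^ (k + (s+1) + (n - k))) from rfl,
        h1, h2]
      ring
    rw [Finset.sum_congr rfl hterm, ← Finset.sum_mul]
    rw [hc]
    rw [coeff_eval s n]
    have hs1 : ((s+1 : ℕ) : ℝ) = (s : ℝ) + 1 := by push_cast; ring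
    rw [hs1]
    simp only [div_eq_mul_inv, mul_inv]
    ring
  calc ∑' k : ℕ, c k * y ^ (k + (s+1))
      = ∑' p : ℕ × ℕ, F p := hLHS.symm
    _ = ∑' n : ℕ, ∑ kl ∈ Finset.HasAntidiagonal.antidiagonal n, F kl := hdiag
    _ = ∑' n : ℕ, ((-1 : ℝ) ^ (s+1) / ((s+1 : ℕ) : ℝ))
          * (x ^ (n + (s+1)) / ((n : ℝ) + ((s+1 : ℕ) : ℝ))) := tsum_congr hanti
    _ = ((-1 : ℝ) ^ (s+1) / ((s+1 : ℕ) : ℝ))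
          * ∑' n : ℕ, x ^ (n + (s+1)) / ((n : ℝ) + ((s+1 : ℕ) : ℝ)) := tsum_mul_left
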